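/- Let V be a finite-dimensional real inner product space and let P : V → V be a linear map with P² = P, P ≠ 0, and P ≠ I. Then the operator norms of P and of I − P (with respect to the norm induced by the inner product) are equal: ‖I − P‖ = ‖P‖. -/

import Mathlib

set_option maxHeartbeats 1000000 in
lemma aux_proj_norm {V : Type*} [NormedAddCommGroup V] [InnerProductSpace ℝ V]
    (P : V →L[ℝ] V) (hidem : P.comp P = P) (h0 : P ≠ 0) (x : V) :
    ‖x - P x‖ ≤ ‖P‖ * ‖x‖ := by
  -- first: 1 ≤ ‖P‖
  obtain ⟨y, hy⟩ : ∃ y, P y ≠ 0 := by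
    by_contra h
    push_neg at h
    exact h0 (by ext z; simpa using h z)
  have hPP : ∀ z, P (P z) = P z := fun z => congrArg (fun f => f z) hidem
  have hK : 1 ≤ ‖P‖ := by
    have h1 : ‖P y‖ ≤ ‖P‖ * ‖P y‖ := by
      conv_lhs => rw [← hPP y]
      exact P.le_opNorm (P y)
    have hpy : 0 < ‖P y‖ := norm_pos_iff.mpr hy
    nlinarith
  set a := P x with ha
  set b := x - P x with hb
  have hPa : P a = a := hPP x
  have hPb : P b = 0 := by
    simp [hb, map_sub, hPP x]
  have hx : x = a + b := by simp [ha, hb]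
  by_cases hb0 : b = 0
  · rw [hb0, norm_zero]; positivity
  by_cases ha0 : a = 0
  · have : x = b := by simp [hx, ha0]
    rw [← this]
    nlinarith [norm_nonneg x]
  -- main case
  set K := ‖P‖ with hKdef
  set A := (inner ℝ a a : ℝ) with hA
  set B := (inner ℝ b b : ℝ) with hB
  set t := (inner ℝ a b : ℝ) with ht
  have hApos : 0 < A := by
    rw [hA, real_inner_self_eq_norm_sq]
    exact pow_pos (norm_pos_iff.mpr ha0) 2
  have hBpos : 0 < B := by
    rw [hB, real_inner_self_eq_norm_sq]
    exact pow_pos (norm_pos_iff.mpr hb0) 2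
  -- witness w = B • a - t • b
  set w := B • a - t • b with hw
  have hPw : P w = B • a := by
    simp [hw, map_sub, map_smul, hPa, hPb]
  have hkey : ‖P w‖ ≤ K * ‖w‖ := P.le_opNorm w
  have hnPw : ‖P w‖ ^ 2 = B ^ 2 * A := by
    rw [hPw, norm_smul, mul_pow, Real.norm_eq_abs, sq_abs,
      ← real_inner_self_eq_norm_sq, ← hA]
  have hnw : ‖w‖ ^ 2 = B ^ 2 * A - B * t ^ 2 := by
    have : ‖w‖ ^ 2 = (inner ℝ w w : ℝ) := (real_inner_self_eq_norm_sq w).symm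
    rw [this, hw]
    simp only [inner_sub_sub_self, real_inner_smul_left, real_inner_smul_right,
      inner_sub_left, inner_sub_right]
    rw [real_inner_comm a b, ← hA, ← hB, ← ht]
    ring
  have hsq : ‖P w‖ ^ 2 ≤ K ^ 2 * ‖w‖ ^ 2 := by
    have h1 : 0 ≤ ‖P w‖ := norm_nonneg _
    have h2 : 0 ≤ K * ‖w‖ := by positivity
    nlinarith
  have hH : K ^ 2 * t ^ 2 ≤ (K ^ 2 - 1) * A * B := by
    rw [hnPw, hnw] at hsq
    nlinarith
  -- conclude
  have hnx : ‖x‖ ^ 2 = A + 2 * t + B := by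
    have : ‖x‖ ^ 2 = (inner ℝ x x : ℝ) := (real_inner_self_eq_norm_sq x).symm
    rw [this, hx, inner_add_add_self, real_inner_comm a b, ← hA, ← hB, ← ht]
    ring
  have hnb : ‖b‖ ^ 2 = B := by
    rw [← real_inner_self_eq_norm_sq, hB]
  have hfinal : ‖b‖ ^ 2 ≤ K ^ 2 * ‖x‖ ^ 2 := by
    rw [hnb, hnx]
    have hKpos : (0:ℝ) < K := lt_of_lt_of_le one_pos hK
    nlinarith [sq_nonneg (K ^ 2 * A + K ^ 2 * t),
      mul_le_mul_of_nonneg_left hH (sq_nonneg K),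
      mul_pos (pow_pos hKpos 2) hApos, mul_pos hApos hBpos]
  have h2 : ‖b‖ ^ 2 ≤ (K * ‖x‖) ^ 2 := by rw [mul_pow]; exact hfinal
  exact (pow_le_pow_iff_left₀ (norm_nonneg b) (by positivity) two_ne_zero).mp h2

theorem stmt_7 {V : Type*} [NormedAddCommGroup V] [InnerProductSpace ℝ V]
    [FiniteDimensional ℝ V]
    (P : V →L[ℝ] V) (hidem : P.comp P = P) (h0 : P ≠ 0)
    (hI : P ≠ ContinuousLinearMap.id ℝ V) :
    ‖ContinuousLinearMap.id ℝ V - P‖ = ‖P‖ := by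
  set Q := ContinuousLinearMap.id ℝ V - P with hQ
  have hPP : ∀ z, P (P z) = P z := fun z => congrArg (fun f => f z) hidem
  have hQidem : Q.comp Q = Q := by
    ext z
    simp [hQ, ContinuousLinearMap.comp_apply, ContinuousLinearMap.sub_apply,
      map_sub, hPP z]
  have hQ0 : Q ≠ 0 := by
    intro h
    apply hI
    have := sub_eq_zero.mp (hQ ▸ h)
    exact this.symm
  have hQx : ∀ z, Q z = z - P z := by
    intro z; simp [hQ]
  apply le_antisymm
  · apply ContinuousLinearMap.opNorm_le_bound _ (norm_nonneg P)
    intro z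
    rw [hQx z]
    exact aux_proj_norm P hidem h0 z
  · apply ContinuousLinearMap.opNorm_le_bound _ (norm_nonneg Q)
    intro z
    have h := aux_proj_norm Q hQidem hQ0 z
    rw [hQx z] at h
    simpa using h
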